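/- arXiv:2309.01167 — 4 statements merged into one kernel-verified Lean document; each statement's English description precedes it below -/
import Mathlib

section
/- Let d ≥ 1 and let U be distributed according to the normalized Haar probability measure on the group U(d) of d×d complex unitary matrices. For any natural numbers k ≠ k' and any index families i, j : Fin k → Fin d and i', j' : Fin k' → Fin d, the expectation E[ ∏_{ℓ=1}^{k} u(i_ℓ, j_ℓ) · ∏_{ℓ=1}^{k'} conj(u(i'_ℓ, j'_ℓ)) ] equals 0, where u(a,b) denotes the (a,b) entry of U. -/
open MeasureTheory Matrix

noncomputable instance {d : ℕ} : MeasurableSpace (Matrix.unitaryGroup (Fin d) ℂ) := borel _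
instance {d : ℕ} : BorelSpace (Matrix.unitaryGroup (Fin d) ℂ) := ⟨rfl⟩

/-- For the normalized Haar probability measure on the unitary group `U(d)`, the expectation of a
monomial with `k` factors `u(iₗ, jₗ)` and `k'` factors `conj(u(i'ₗ, j'ₗ))` vanishes when `k ≠ k'`. -/
theorem unitary_haar_unbalanced_moment_eq_zero {d : ℕ} (hd : 1 ≤ d)
    (μ : Measure (Matrix.unitaryGroup (Fin d) ℂ)) [μ.IsHaarMeasure] [IsProbabilityMeasure μ]
    {k k' : ℕ} (hkk' : k ≠ k') (i j : Fin k → Fin d) (i' j' : Fin k' → Fin d) :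
    ∫ U : Matrix.unitaryGroup (Fin d) ℂ,
        (∏ ℓ, (U : Matrix (Fin d) (Fin d) ℂ) (i ℓ) (j ℓ)) *
        (∏ ℓ, (starRingEnd ℂ) ((U : Matrix (Fin d) (Fin d) ℂ) (i' ℓ) (j' ℓ))) ∂μ = 0 := by
  set f : Matrix.unitaryGroup (Fin d) ℂ → ℂ := fun U =>
    (∏ ℓ, (U : Matrix (Fin d) (Fin d) ℂ) (i ℓ) (j ℓ)) *
        (∏ ℓ, (starRingEnd ℂ) ((U : Matrix (Fin d) (Fin d) ℂ) (i' ℓ) (j' ℓ))) with hf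
  have hm : (k : ℂ) - (k' : ℂ) ≠ 0 := sub_ne_zero.mpr (by exact_mod_cast hkk')
  set w : ℂ := (Real.pi : ℂ) * Complex.I / ((k : ℂ) - (k' : ℂ)) with hw
  set z : ℂ := Complex.exp w with hz
  have hcw : (starRingEnd ℂ) w = -w := by
    simp [hw, map_div₀, _root_.map_mul, Complex.conj_I, neg_div, mul_neg]
  have hcz : (starRingEnd ℂ) z = Complex.exp (-w) := by
    rw [hz, ← Complex.exp_conj, hcw]
  have hzz : z * (starRingEnd ℂ) z = 1 := by
    rw [hcz, hz, ← Complex.exp_add, add_neg_cancel, Complex.exp_zero]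
  have hkey : z ^ k * ((starRingEnd ℂ) z) ^ k' = -1 := by
    rw [hcz, hz, ← Complex.exp_nat_mul, ← Complex.exp_nat_mul, ← Complex.exp_add]
    have : (k : ℂ) * w + (k' : ℂ) * (-w) = ((k : ℂ) - (k' : ℂ)) * w := by ring
    rw [this, hw, mul_div_cancel₀ _ hm, Complex.exp_pi_mul_I]
  -- the scalar matrix z • 1 is unitary
  have hmem : (z • (1 : Matrix (Fin d) (Fin d) ℂ)) ∈ Matrix.unitaryGroup (Fin d) ℂ := by
    rw [Matrix.mem_unitaryGroup_iff]
    rw [star_smul, star_one, smul_mul_smul_comm, one_mul]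
    simp only [Complex.star_def, hzz, one_smul]
  set c : Matrix.unitaryGroup (Fin d) ℂ := ⟨z • (1 : Matrix (Fin d) (Fin d) ℂ), hmem⟩ with hc
  have hmul : ∀ U : Matrix.unitaryGroup (Fin d) ℂ, f (c * U) = (-1 : ℂ) * f U := by
    intro U
    have hcoe : ((c * U : Matrix.unitaryGroup (Fin d) ℂ) : Matrix (Fin d) (Fin d) ℂ)
        = z • (U : Matrix (Fin d) (Fin d) ℂ) := by
      show ((c : Matrix (Fin d) (Fin d) ℂ) * (U : Matrix (Fin d) (Fin d) ℂ)) = _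
      rw [hc]
      simp [smul_mul_assoc]
    simp only [hf, hcoe, Matrix.smul_apply, smul_eq_mul, _root_.map_mul,
      Finset.prod_mul_distrib, Finset.prod_const, Finset.card_univ, Fintype.card_fin]
    rw [← hkey]; ring
  have hinv : ∫ U, f (c * U) ∂μ = ∫ U, f U ∂μ :=
    MeasureTheory.integral_mul_left_eq_self f c
  have h2 : ∫ U, f (c * U) ∂μ = (-1 : ℂ) * ∫ U, f U ∂μ := by
    simp_rw [hmul]
    exact MeasureTheory.integral_const_mul _ _
  have h3 : ∫ U, f U ∂μ = (-1 : ℂ) * ∫ U, f U ∂μ := hinv.symm.trans h2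
  have : ∫ U, f U ∂μ = 0 := by linear_combination h3 / 2
  exact this
end

section
/- Let V be a standard real Gaussian vector in ℝ^d, i.e. the entries V(j), j ∈ Fin d, are i.i.d. real Gaussian with mean 0 and variance 1. Then for every k and every index family i : Fin (2k) → Fin d, E[ ∏_{ℓ=1}^{2k} v(i_ℓ) ] = ∑_{σ} ∏_{x=1}^{2k} δ(i_x, i_{σ(x)}), where the sum runs over all fixed-point-free involutions σ of {1,…,2k} (i.e. permutations with σ∘σ = id and σ(x) ≠ x for all x). Moreover, for every odd n and every i : Fin n → Fin d, E[ ∏_{ℓ=1}^{n} v(i_ℓ) ] = 0. -/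
open MeasureTheory ProbabilityTheory Real Finset
open scoped NNReal ENNReal

/-- The law of a standard real Gaussian vector in `ℝ^d`: i.i.d. entries, each real Gaussian of
mean `0` and variance `1`. -/
noncomputable def realGaussianVec (d : ℕ) : Measure (Fin d → ℝ) :=
  Measure.pi fun _ => gaussianReal 0 1

/-- The fixed-point-free involutions of `Fin n`, encoding the pairings of `{1,…,n}`. -/
def fpfInvolutions (n : ℕ) : Finset (Equiv.Perm (Fin n)) :=
  Finset.univ.filter fun σ => σ * σ = 1 ∧ ∀ x, σ x ≠ x

set_option linter.unusedSectionVars false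

namespace WickAux

/-- Double-factorial style sequence: `df n = (n-1)!!` for even `n`, `0` for odd `n`. -/
def df : ℕ → ℕ
  | 0 => 1
  | 1 => 0
  | (n+2) => (n+1) * df n

lemma df_rec {m : ℕ} (hm : 1 ≤ m) : df m = (m - 1) * df (m - 2) := by
  match m with
  | 1 => simp [df]
  | (n+2) => simp [df]

lemma df_odd : ∀ {n : ℕ}, Odd n → df n = 0 := by
  intro n
  induction n using Nat.strong_induction_on with
  | _ n ih =>
    match n with
    | 0 => intro h; exact absurd h (by simp)
    | 1 => intro _; rfl
    | (k+2) =>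
      intro h
      have hk : Odd k := by
        rcases h with ⟨m, hm⟩; exact ⟨m - 1, by omega⟩
      simp [df, ih k (by omega) hk]

/-- integrability of `x ^ n * exp (-x^2/2)` -/
lemma integrable_pow_gauss (n : ℕ) :
    Integrable (fun x : ℝ => x ^ n * Real.exp (-x ^ 2 / 2)) := by
  have h1 : Integrable (fun x : ℝ => Real.exp (-(1/2 : ℝ) * x ^ 2)) :=
    integrable_exp_neg_mul_sq (by norm_num)
  have h2 : Integrable (fun x : ℝ => Real.exp (-(1/4 : ℝ) * x ^ 2)) :=
    integrable_exp_neg_mul_sq (by norm_num)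
  have hg : Integrable (fun x : ℝ =>
      Real.exp (-(1/2 : ℝ) * x ^ 2) + (4 ^ n * n.factorial : ℝ) * Real.exp (-(1/4 : ℝ) * x ^ 2)) :=
    h1.add (h2.const_mul _)
  refine hg.mono ?_ (ae_of_all _ fun x => ?_)
  · exact (Continuous.mul (continuous_pow n) (by fun_prop)).aestronglyMeasurable
  · have hx2 : (0:ℝ) ≤ x ^ 2 / 4 := by positivity
    have hgnn : (0:ℝ) ≤ Real.exp (-(1/2 : ℝ) * x ^ 2)
        + (4 ^ n * n.factorial : ℝ) * Real.exp (-(1/4 : ℝ) * x ^ 2) := by positivity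
    rw [Real.norm_eq_abs, Real.norm_eq_abs, abs_of_nonneg hgnn, abs_mul, abs_pow,
      Real.abs_exp]
    rcases le_total (|x|) 1 with hx | hx
    · have : |x| ^ n ≤ 1 := pow_le_one₀ (abs_nonneg x) hx
      have h3 : |x| ^ n * Real.exp (-x ^ 2 / 2) ≤ Real.exp (-(1/2:ℝ) * x ^ 2) := by
        calc |x| ^ n * Real.exp (-x ^ 2 / 2) ≤ 1 * Real.exp (-x ^ 2 / 2) := by
              exact mul_le_mul_of_nonneg_right this (Real.exp_nonneg _)
          _ = Real.exp (-(1/2:ℝ) * x ^ 2) := by rw [one_mul]; ring_nf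
      refine h3.trans (le_add_of_nonneg_right (by positivity))
    · have h4 : |x| ^ n ≤ (x ^ 2) ^ n := by
        calc |x| ^ n ≤ (|x| ^ 2) ^ n := by
              rw [← pow_mul]
              exact pow_le_pow_right₀ hx (by omega)
          _ = (x ^ 2) ^ n := by rw [sq_abs]
      have h5 : (x ^ 2) ^ n ≤ 4 ^ n * n.factorial * Real.exp (x ^ 2 / 4) := by
        have := Real.pow_div_factorial_le_exp _ hx2 n
        have h6 : (x ^ 2 / 4) ^ n ≤ n.factorial * Real.exp (x ^ 2 / 4) := by
          rw [div_le_iff₀ (by positivity)] at this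
          linarith [this]
        calc (x ^ 2) ^ n = 4 ^ n * (x ^ 2 / 4) ^ n := by
              rw [← mul_pow]; ring_nf
          _ ≤ 4 ^ n * (n.factorial * Real.exp (x ^ 2 / 4)) := by
              exact mul_le_mul_of_nonneg_left h6 (by positivity)
          _ = 4 ^ n * n.factorial * Real.exp (x ^ 2 / 4) := by ring
      calc |x| ^ n * Real.exp (-x ^ 2 / 2)
          ≤ (4 ^ n * n.factorial * Real.exp (x ^ 2 / 4)) * Real.exp (-x ^ 2 / 2) := by
            exact mul_le_mul_of_nonneg_right (h4.trans h5) (Real.exp_nonneg _)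
        _ = 4 ^ n * n.factorial * Real.exp (-(1/4:ℝ) * x ^ 2) := by
            rw [mul_assoc, ← Real.exp_add]; ring_nf
        _ ≤ _ := le_add_of_nonneg_left (by positivity)

lemma hasDerivAt_gauss (x : ℝ) :
    HasDerivAt (fun y : ℝ => Real.exp (-y ^ 2 / 2)) (-x * Real.exp (-x ^ 2 / 2)) x := by
  have h : HasDerivAt (fun y : ℝ => -y ^ 2 / 2) (-x) x := by
    have := ((hasDerivAt_pow 2 x).neg).div_const 2
    refine this.congr_deriv ?_
    norm_num; ring
  have := h.exp
  convert this using 1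
  ring

lemma df_zero : df 0 = 1 := rfl
lemma df_one : df 1 = 0 := rfl
lemma df_two_add (n : ℕ) : df (n + 2) = (n + 1) * df n := rfl

lemma gauss_int_rec (n : ℕ) :
    ∫ x : ℝ, x ^ (n + 2) * Real.exp (-x ^ 2 / 2)
      = (n + 1 : ℝ) * ∫ x : ℝ, x ^ n * Real.exp (-x ^ 2 / 2) := by
  have hF : ∀ x : ℝ, HasDerivAt (fun y : ℝ => -(y ^ (n+1) * Real.exp (-y ^ 2 / 2)))
      (x ^ (n+2) * Real.exp (-x ^ 2 / 2) - (n + 1 : ℝ) * (x ^ n * Real.exp (-x ^ 2 / 2))) x := by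
    intro x
    have h1 := ((hasDerivAt_pow (n+1) x).mul (hasDerivAt_gauss x)).neg
    refine h1.congr_deriv ?_
    push_cast
    ring
  have hint : Integrable (fun x : ℝ =>
      x ^ (n+2) * Real.exp (-x ^ 2 / 2) - (n + 1 : ℝ) * (x ^ n * Real.exp (-x ^ 2 / 2))) :=
    (integrable_pow_gauss (n+2)).sub ((integrable_pow_gauss n).const_mul _)
  have hf : Integrable (fun x : ℝ => -(x ^ (n+1) * Real.exp (-x ^ 2 / 2))) :=
    (integrable_pow_gauss (n+1)).neg
  have h0 := integral_eq_zero_of_hasDerivAt_of_integrable hF hint hf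
  rw [integral_sub (integrable_pow_gauss (n+2)) ((integrable_pow_gauss n).const_mul _),
    MeasureTheory.integral_const_mul, sub_eq_zero] at h0
  exact h0

lemma gauss_int_one : ∫ x : ℝ, x * Real.exp (-x ^ 2 / 2) = 0 := by
  have hF : ∀ x : ℝ, HasDerivAt (fun y : ℝ => -Real.exp (-y ^ 2 / 2))
      (x * Real.exp (-x ^ 2 / 2)) x := by
    intro x
    have := (hasDerivAt_gauss x).neg
    refine this.congr_deriv ?_
    ring
  have hint : Integrable (fun x : ℝ => x * Real.exp (-x ^ 2 / 2)) := by
    simpa using integrable_pow_gauss 1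
  have hf : Integrable (fun x : ℝ => -Real.exp (-x ^ 2 / 2)) :=
    (by simpa using integrable_pow_gauss 0 : Integrable fun x : ℝ => Real.exp (-x ^ 2 / 2)).neg
  exact integral_eq_zero_of_hasDerivAt_of_integrable hF hint hf

/-- conversion to the Gaussian measure -/
lemma integral_gaussianReal_eq (f : ℝ → ℝ) :
    ∫ x, f x ∂(gaussianReal 0 1) = ∫ x, gaussianPDFReal 0 1 x * f x := by
  rw [gaussianReal_of_var_ne_zero 0 one_ne_zero]
  have h : gaussianPDF 0 1 = fun x => ((Real.toNNReal (gaussianPDFReal 0 1 x) : ℝ≥0) : ℝ≥0∞) := by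
    funext x; rfl
  rw [h, integral_withDensity_eq_integral_smul
    ((measurable_gaussianPDFReal 0 1).real_toNNReal) f]
  congr 1
  funext x
  rw [NNReal.smul_def, smul_eq_mul, Real.coe_toNNReal _ (gaussianPDFReal_nonneg 0 1 x)]

lemma gaussianPDFReal_zero_one (x : ℝ) :
    gaussianPDFReal 0 1 x = (Real.sqrt (2 * π))⁻¹ * Real.exp (-x ^ 2 / 2) := by
  simp [gaussianPDFReal]

lemma integral_gaussianReal_eq' (f : ℝ → ℝ) :
    ∫ x, f x ∂(gaussianReal 0 1)
      = (Real.sqrt (2 * π))⁻¹ * ∫ x, f x * Real.exp (-x ^ 2 / 2) := by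
  rw [integral_gaussianReal_eq]
  simp_rw [gaussianPDFReal_zero_one, mul_assoc, mul_comm (Real.exp _) _]
  rw [MeasureTheory.integral_const_mul]

lemma gmoment : ∀ m : ℕ, ∫ x, x ^ m ∂(gaussianReal 0 1) = df m := by
  intro m
  induction m using Nat.strong_induction_on with
  | _ m ih =>
    match m with
    | 0 => simp [df_zero]
    | 1 => 
      rw [integral_gaussianReal_eq' (fun x => x ^ 1)]
      simp_rw [pow_one]
      rw [gauss_int_one, mul_zero, df_one, Nat.cast_zero]
    | (k+2) =>
      rw [integral_gaussianReal_eq' (fun x => x ^ (k+2)), gauss_int_rec, 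
        ← mul_assoc, mul_comm ((Real.sqrt (2 * π))⁻¹) _, mul_assoc,
        ← integral_gaussianReal_eq' (fun x => x ^ k), ih k (by omega), df_two_add]
      push_cast
      ring



lemma lhs_eq (d n : ℕ) (i : Fin n → Fin d) :
    ∫ ω : Fin d → ℝ, ∏ ℓ, ω (i ℓ) ∂(realGaussianVec d)
      = ∏ j : Fin d, (df (Finset.univ.filter fun ℓ => i ℓ = j).card : ℝ) := by
  letI : MeasureSpace ℝ := ⟨gaussianReal 0 1⟩
  letI : SigmaFinite (volume : Measure ℝ) := inferInstanceAs (SigmaFinite (gaussianReal 0 1))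
  have hvol : realGaussianVec d = (volume : Measure (Fin d → ℝ)) := rfl
  rw [hvol]
  have hprod : ∀ ω : Fin d → ℝ,
      ∏ ℓ, ω (i ℓ) = ∏ j : Fin d, (ω j) ^ (Finset.univ.filter fun ℓ => i ℓ = j).card := by
    intro ω
    rw [← Finset.prod_fiberwise Finset.univ i (fun ℓ => ω (i ℓ))]
    refine Finset.prod_congr rfl fun j _ => ?_
    rw [Finset.prod_congr rfl (fun ℓ hℓ => by rw [(Finset.mem_filter.mp hℓ).2] :
        ∀ ℓ ∈ Finset.univ.filter fun ℓ => i ℓ = j, ω (i ℓ) = ω j), Finset.prod_const]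
  simp_rw [hprod]
  rw [MeasureTheory.integral_fintype_prod_volume_eq_prod
    (fun j x => x ^ (Finset.univ.filter fun ℓ => i ℓ = j).card)]
  exact Finset.prod_congr rfl fun j _ => gmoment _

variable {β : Type} [Fintype β] [DecidableEq β]

def pairings (α : Type) [Fintype α] [DecidableEq α] (i : α → β) : Finset (Equiv.Perm α) :=
  Finset.univ.filter fun σ => σ * σ = 1 ∧ (∀ x, σ x ≠ x) ∧ ∀ x, i x = i (σ x)

lemma mem_pairings {α : Type} [Fintype α] [DecidableEq α] {i : α → β} {σ : Equiv.Perm α} :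
    σ ∈ pairings α i ↔ σ * σ = 1 ∧ (∀ x, σ x ≠ x) ∧ ∀ x, i x = i (σ x) := by
  simp [pairings]

lemma invol_apply {α : Type} {σ : Equiv.Perm α} (h : σ * σ = 1) (x : α) : σ (σ x) = x := by
  rw [← Equiv.Perm.mul_apply, h, Equiv.Perm.one_apply]

theorem pairings_card (N : ℕ) :
    ∀ (α : Type) [Fintype α] [DecidableEq α] (i : α → β), Fintype.card α = N →
      (pairings α i).card = ∏ j : β, df ((Finset.univ.filter fun x => i x = j).card) := by
  induction N using Nat.strong_induction_on with
  | _ N ih =>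
    intro α _ _ i hcard
    rcases Nat.eq_zero_or_pos N with h0 | hpos
    · subst h0
      have hempty : IsEmpty α := Fintype.card_eq_zero_iff.mp hcard
      have h1 : pairings α i = Finset.univ := by
        apply Finset.eq_univ_of_forall
        intro σ
        rw [mem_pairings]
        exact ⟨Subsingleton.elim _ _, fun x => (hempty.false x).elim,
          fun x => (hempty.false x).elim⟩
      have h2 : ∀ j : β, (Finset.univ.filter fun x : α => i x = j) = ∅ := by
        intro j
        simp [Finset.univ_eq_empty]
      rw [h1, Finset.card_univ, Fintype.card_perm, hcard]
      simp [h2, df_zero]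
    · -- nonempty case
      have hne : Nonempty α := Fintype.card_pos_iff.mp (by omega)
      obtain ⟨a⟩ := hne
      set B : Finset α := Finset.univ.filter fun b => b ≠ a ∧ i b = i a with hB
      -- Step A
      have stepA : (pairings α i).card
          = ∑ b ∈ B, ((pairings α i).filter fun σ => σ a = b).card := by
        apply Finset.card_eq_sum_card_fiberwise
        intro σ hσ
        rw [Finset.mem_coe, mem_pairings] at hσ
        simp only [hB, Finset.mem_coe, Finset.mem_filter, Finset.mem_univ, true_and]
        exact ⟨hσ.2.1 a, (hσ.2.2 a).symm⟩
      -- Step B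
      have stepB : ∀ b ∈ B, ((pairings α i).filter fun σ => σ a = b).card
          = (pairings {x : α // x ≠ a ∧ x ≠ b} (fun x => i x.val)).card := by
        intro b hb
        simp only [hB, Finset.mem_filter, Finset.mem_univ, true_and] at hb
        obtain ⟨hba, hiba⟩ := hb
        have hab : a ≠ b := hba.symm
        have hpa : ¬ (a ≠ a ∧ a ≠ b) := fun h => h.1 rfl
        have hpb : ¬ (b ≠ a ∧ b ≠ b) := fun h => h.2 rfl
        -- forward application facts
        have hFa : ∀ τ : Equiv.Perm {x : α // x ≠ a ∧ x ≠ b},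
            (Equiv.swap a b * Equiv.Perm.ofSubtype τ) a = b := by
          intro τ
          rw [Equiv.Perm.mul_apply, Equiv.Perm.ofSubtype_apply_of_not_mem τ hpa,
            Equiv.swap_apply_left]
        have hFb : ∀ τ : Equiv.Perm {x : α // x ≠ a ∧ x ≠ b},
            (Equiv.swap a b * Equiv.Perm.ofSubtype τ) b = a := by
          intro τ
          rw [Equiv.Perm.mul_apply, Equiv.Perm.ofSubtype_apply_of_not_mem τ hpb,
            Equiv.swap_apply_right]
        have hFx : ∀ (τ : Equiv.Perm {x : α // x ≠ a ∧ x ≠ b}) (x : α)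
            (hx : x ≠ a ∧ x ≠ b),
            (Equiv.swap a b * Equiv.Perm.ofSubtype τ) x = (τ ⟨x, hx⟩).val := by
          intro τ x hx
          rw [Equiv.Perm.mul_apply, Equiv.Perm.ofSubtype_apply_of_mem τ hx]
          exact Equiv.swap_apply_of_ne_of_ne (τ ⟨x, hx⟩).prop.1 (τ ⟨x, hx⟩).prop.2
        refine (Finset.card_bij'
          (fun σ hσ => Equiv.Perm.subtypePerm σ ?_)
          (fun τ hτ => Equiv.swap a b * Equiv.Perm.ofSubtype τ)
          ?_ ?_ ?_ ?_).symm.symm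
        · -- the predicate-stability proof for subtypePerm
          intro x
          simp only [Finset.mem_filter, mem_pairings] at hσ
          obtain ⟨⟨hinv, hfpf, hcomp⟩, hσa⟩ := hσ
          have hσb : σ b = a := by rw [← hσa, invol_apply hinv]
          refine Iff.symm ?_
          constructor
          · rintro ⟨hxa, hxb⟩
            constructor
            · intro h
              exact hxb (by rw [← invol_apply hinv x, h, hσa])
            · intro h
              exact hxa (by rw [← invol_apply hinv x, h, hσb])
          · rintro ⟨hxa, hxb⟩
            constructor
            · rintro rfl; exact hxb hσa
            · rintro rfl; exact hxa hσb
        · -- restriction lands in pairings of the subtype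
          intro σ hσ
          simp only [Finset.mem_filter, mem_pairings] at hσ
          obtain ⟨⟨hinv, hfpf, hcomp⟩, hσa⟩ := hσ
          rw [mem_pairings]
          refine ⟨?_, ?_, ?_⟩
          · apply Equiv.ext
            intro x
            apply Subtype.ext
            simp only [Equiv.Perm.mul_apply, Equiv.Perm.subtypePerm_apply]
            exact invol_apply hinv x.val
          · intro x h
            exact hfpf x.val (congrArg Subtype.val h)
          · intro x
            exact hcomp x.val
        · -- extension lands in the filtered pairings
          intro τ hτ
          rw [mem_pairings] at hτ
          obtain ⟨hinv, hfpf, hcomp⟩ := hτ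
          simp only [Finset.mem_filter, mem_pairings]
          refine ⟨⟨?_, ?_, ?_⟩, hFa τ⟩
          · apply Equiv.ext
            intro x
            rw [Equiv.Perm.mul_apply]
            by_cases hxa : x = a
            · subst hxa; rw [hFa, hFb, Equiv.Perm.one_apply]
            by_cases hxb : x = b
            · subst hxb; rw [hFb, hFa, Equiv.Perm.one_apply]
            · have hx : x ≠ a ∧ x ≠ b := ⟨hxa, hxb⟩
              rw [hFx τ x hx, hFx τ _ (τ ⟨x, hx⟩).prop, Equiv.Perm.one_apply]
              have := invol_apply hinv ⟨x, hx⟩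
              rw [show (⟨(τ ⟨x, hx⟩).val, (τ ⟨x, hx⟩).prop⟩ : {x : α // x ≠ a ∧ x ≠ b})
                = τ ⟨x, hx⟩ from rfl, this]
          · intro x h
            by_cases hxa : x = a
            · subst hxa; rw [hFa] at h; exact hab h.symm
            by_cases hxb : x = b
            · subst hxb; rw [hFb] at h; exact hab h
            · have hx : x ≠ a ∧ x ≠ b := ⟨hxa, hxb⟩
              rw [hFx τ x hx] at h
              exact hfpf ⟨x, hx⟩ (Subtype.ext h)
          · intro x
            by_cases hxa : x = a
            · subst hxa; rw [hFa]; exact hiba.symm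
            by_cases hxb : x = b
            · subst hxb; rw [hFb]; exact hiba
            · have hx : x ≠ a ∧ x ≠ b := ⟨hxa, hxb⟩
              rw [hFx τ x hx]
              exact hcomp ⟨x, hx⟩
        · -- left inverse : extend (restrict σ) = σ
          intro σ hσ
          simp only [Finset.mem_filter, mem_pairings] at hσ
          obtain ⟨⟨hinv, hfpf, hcomp⟩, hσa⟩ := hσ
          have hσb : σ b = a := by rw [← hσa, invol_apply hinv]
          apply Equiv.ext
          intro x
          by_cases hxa : x = a
          · subst hxa; rw [hFa, hσa]
          by_cases hxb : x = b
          · subst hxb; rw [hFb, hσb]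
          · have hx : x ≠ a ∧ x ≠ b := ⟨hxa, hxb⟩
            rw [hFx _ x hx, Equiv.Perm.subtypePerm_apply]
        · -- right inverse : restrict (extend τ) = τ
          intro τ hτ
          apply Equiv.ext
          intro x
          apply Subtype.ext
          rw [Equiv.Perm.subtypePerm_apply]
          exact hFx τ x.val x.prop
      -- Step C : fibers of the subtype
      have stepC : ∀ b ∈ B, ∀ j : β,
          (Finset.univ.filter fun x : {x : α // x ≠ a ∧ x ≠ b} => i x.val = j).card
            = if j = i a then (Finset.univ.filter fun x : α => i x = j).card - 2
              else (Finset.univ.filter fun x : α => i x = j).card := by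
        intro b hb j
        simp only [hB, Finset.mem_filter, Finset.mem_univ, true_and] at hb
        obtain ⟨hba, hiba⟩ := hb
        have hab : a ≠ b := hba.symm
        have e1 : (Finset.univ.filter fun x : {x : α // x ≠ a ∧ x ≠ b} => i x.val = j).card
            = (Finset.univ.filter fun x : α => (x ≠ a ∧ x ≠ b) ∧ i x = j).card := by
          rw [← Fintype.card_subtype, ← Fintype.card_subtype]
          exact Fintype.card_congr
            (Equiv.subtypeSubtypeEquivSubtypeInter (fun x => x ≠ a ∧ x ≠ b) (fun x => i x = j))
        rw [e1]
        have e2 : (Finset.univ.filter fun x : α => (x ≠ a ∧ x ≠ b) ∧ i x = j)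
            = (Finset.univ.filter fun x : α => i x = j) \ {a, b} := by
          ext x
          simp only [Finset.mem_filter, Finset.mem_univ, true_and, Finset.mem_sdiff,
            Finset.mem_insert, Finset.mem_singleton]
          tauto
        rw [e2]
        by_cases hj : j = i a
        · subst hj
          rw [if_pos rfl, Finset.card_sdiff_of_subset]
          · congr 1
            rw [Finset.card_insert_of_notMem (by simpa using hab), Finset.card_singleton]
          · intro x hx
            simp only [Finset.mem_insert, Finset.mem_singleton] at hx
            simp only [Finset.mem_filter, Finset.mem_univ, true_and]
            rcases hx with rfl | rfl
            · rfl
            · exact hiba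
        · rw [if_neg hj]
          congr 1
          apply Finset.sdiff_eq_self_of_disjoint
          rw [Finset.disjoint_left]
          intro x hx hx2
          simp only [Finset.mem_filter, Finset.mem_univ, true_and] at hx
          simp only [Finset.mem_insert, Finset.mem_singleton] at hx2
          rcases hx2 with rfl | rfl
          · exact hj hx.symm
          · exact hj (hiba ▸ hx.symm)
      -- card of the subtype
      have cardS : ∀ b ∈ B, Fintype.card {x : α // x ≠ a ∧ x ≠ b} = N - 2 := by
        intro b hb
        simp only [hB, Finset.mem_filter, Finset.mem_univ, true_and] at hb
        have hab : a ≠ b := hb.1.symm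
        rw [Fintype.card_subtype]
        have e3 : (Finset.univ.filter fun x : α => x ≠ a ∧ x ≠ b)
            = Finset.univ \ {a, b} := by
          ext x
          simp [and_comm]
        rw [e3, Finset.card_sdiff_of_subset (Finset.subset_univ _), Finset.card_univ, hcard,
          Finset.card_insert_of_notMem (by simpa using hab), Finset.card_singleton]
      -- apply the induction hypothesis
      have stepIH : ∀ b ∈ B,
          (pairings {x : α // x ≠ a ∧ x ≠ b} (fun x => i x.val)).card
            = ∏ j : β, df (if j = i a then (Finset.univ.filter fun x : α => i x = j).card - 2
                else (Finset.univ.filter fun x : α => i x = j).card) := by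
        intro b hb
        rw [ih (N - 2) (by omega) _ _ (cardS b hb)]
        exact Finset.prod_congr rfl fun j _ => by rw [stepC b hb j]
      -- B card
      have hBcard : B.card = (Finset.univ.filter fun x : α => i x = i a).card - 1 := by
        have e4 : B = (Finset.univ.filter fun x : α => i x = i a).erase a := by
          ext x
          simp only [hB, Finset.mem_filter, Finset.mem_univ, true_and, Finset.mem_erase]
        rw [e4]
        exact Finset.card_erase_of_mem (by simp)
      have hma : 1 ≤ (Finset.univ.filter fun x : α => i x = i a).card :=
        Finset.card_pos.mpr ⟨a, by simp⟩
      -- assemble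
      rw [stepA, Finset.sum_congr rfl (fun b hb => by rw [stepB b hb, stepIH b hb]),
        Finset.sum_const, smul_eq_mul, hBcard]
      -- now a pure product identity
      set m : β → ℕ := fun j => (Finset.univ.filter fun x : α => i x = j).card with hm
      rw [← Finset.mul_prod_erase Finset.univ (fun j => df (m j)) (Finset.mem_univ (i a)),
        ← Finset.mul_prod_erase Finset.univ
          (fun j => df (if j = i a then m j - 2 else m j)) (Finset.mem_univ (i a)),
        if_pos rfl, df_rec hma]
      have hcong : (∏ j ∈ Finset.univ.erase (i a), df (if j = i a then m j - 2 else m j))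
          = ∏ j ∈ Finset.univ.erase (i a), df (m j) :=
        Finset.prod_congr rfl fun j hj => by rw [if_neg (Finset.mem_erase.mp hj).1]
      rw [hcong]
      ring

end WickAux

open WickAux in
/-- Wick formula for a standard real Gaussian vector: the `2k`-th moments are sums over pairings
(fixed-point-free involutions) of products of Kronecker deltas, and the odd moments vanish. -/
theorem real_gaussian_vector_moment (d : ℕ) :
    (∀ (k : ℕ) (i : Fin (2 * k) → Fin d),
      ∫ ω : Fin d → ℝ, ∏ ℓ, ω (i ℓ) ∂(realGaussianVec d)
        = ∑ σ ∈ fpfInvolutions (2 * k), ∏ x, if i x = i (σ x) then (1 : ℝ) else 0) ∧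
    (∀ (n : ℕ), Odd n → ∀ i : Fin n → Fin d,
      ∫ ω : Fin d → ℝ, ∏ ℓ, ω (i ℓ) ∂(realGaussianVec d) = 0) := by
  have main : ∀ (n : ℕ) (i : Fin n → Fin d),
      ∫ ω : Fin d → ℝ, ∏ ℓ, ω (i ℓ) ∂(realGaussianVec d)
        = ∑ σ ∈ fpfInvolutions n, ∏ x, if i x = i (σ x) then (1 : ℝ) else 0 := by
    intro n i
    have hrhs : (∑ σ ∈ fpfInvolutions n, ∏ x, if i x = i (σ x) then (1 : ℝ) else 0)
        = ((pairings (Fin n) i).card : ℝ) := by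
      have h1 : ∀ σ : Equiv.Perm (Fin n), (∏ x, if i x = i (σ x) then (1 : ℝ) else 0)
          = if ∀ x, i x = i (σ x) then (1 : ℝ) else 0 := by
        intro σ
        rw [Finset.prod_boole]
        simp
      have h2 : (fpfInvolutions n).filter (fun σ => ∀ x, i x = i (σ x))
          = pairings (Fin n) i := by
        unfold fpfInvolutions pairings
        rw [Finset.filter_filter]
        ext σ
        simp only [Finset.mem_filter, Finset.mem_univ, true_and]
        tauto
      simp_rw [h1]
      rw [Finset.sum_boole, h2]
    rw [hrhs, lhs_eq, pairings_card n (Fin n) i (Fintype.card_fin n)]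
    push_cast
    rfl
  refine ⟨fun k i => main (2 * k) i, fun n hn i => ?_⟩
  rw [lhs_eq]
  have hodd : ∃ j : Fin d, Odd ((Finset.univ.filter fun ℓ => i ℓ = j).card) := by
    by_contra h
    push_neg at h
    simp only [Nat.not_odd_iff_even] at h
    have heven : Even (∑ j : Fin d, (Finset.univ.filter fun ℓ => i ℓ = j).card) :=
      Finset.even_sum _ fun j _ => h j
    rw [← Finset.card_eq_sum_card_fiberwise (fun x _ => Finset.mem_univ (i x)),
      Finset.card_univ, Fintype.card_fin] at heven
    exact (Nat.not_even_iff_odd.mpr hn) heven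
  obtain ⟨j, hj⟩ := hodd
  apply Finset.prod_eq_zero (Finset.mem_univ j)
  rw [df_odd hj]
  norm_num
end

section
/- Let M be a d₁×d₂ standard complex Gaussian matrix, i.e. all entries m(a,b) = x(a,b) + i·y(a,b) where all x(a,b), y(a,b) are independent real Gaussians with mean 0 and variance 1/2. Then for every k and all index families i, i' : Fin k → Fin d₁ and j, j' : Fin k → Fin d₂, E[ ∏_{ℓ=1}^{k} m(i_ℓ, j_ℓ) · ∏_{ℓ=1}^{k} conj(m(i'_ℓ, j'_ℓ)) ] = ∑_{α ∈ S_k} ∏_{ℓ=1}^{k} δ(i_ℓ, i'_{α(ℓ)}) · δ(j_ℓ, j'_{α(ℓ)}). -/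
open MeasureTheory ProbabilityTheory
open Real Set Finset
open scoped NNReal ENNReal

/-- The law of a `d₁ × d₂` standard complex Gaussian matrix: each entry consists of a real and an
imaginary part, each real Gaussian of mean `0` and variance `1/2`, all jointly independent. -/
noncomputable def complexGaussianMat (d₁ d₂ : ℕ) : Measure (Fin d₁ × Fin d₂ → ℝ × ℝ) :=
  Measure.pi fun _ => (gaussianReal 0 (1 / 2)).prod (gaussianReal 0 (1 / 2))

/-- The `(a,b)`-entry `m(a,b) = x(a,b) + i·y(a,b)` of the complex Gaussian matrix. -/
noncomputable def cmatEntry {d₁ d₂ : ℕ} (ω : Fin d₁ × Fin d₂ → ℝ × ℝ) (a : Fin d₁) (b : Fin d₂) :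
    ℂ :=
  ((ω (a, b)).1 : ℂ) + ((ω (a, b)).2 : ℂ) * Complex.I


lemma gaussian_prod_eq :
    (gaussianReal 0 (1 / 2)).prod (gaussianReal 0 (1 / 2)) =
      (volume : Measure (ℝ × ℝ)).withDensity
        (fun p => ENNReal.ofReal
          (gaussianPDFReal 0 (1 / 2) p.1 * gaussianPDFReal 0 (1 / 2) p.2)) := by
  have hv : (1 / 2 : ℝ≥0) ≠ 0 := by norm_num
  refine (Measure.prod_eq (μ := gaussianReal 0 (1 / 2)) (ν := gaussianReal 0 (1 / 2)) (μν := (volume : Measure (ℝ × ℝ)).withDensity (fun p => ENNReal.ofReal (gaussianPDFReal 0 (1 / 2) p.1 * gaussianPDFReal 0 (1 / 2) p.2))) fun s t hs ht => ?_)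
  rw [withDensity_apply _ (hs.prod ht)]
  have : ∀ p : ℝ × ℝ, ENNReal.ofReal
      (gaussianPDFReal 0 (1 / 2) p.1 * gaussianPDFReal 0 (1 / 2) p.2)
      = gaussianPDF 0 (1 / 2) p.1 * gaussianPDF 0 (1 / 2) p.2 := by
    intro p
    rw [ENNReal.ofReal_mul (gaussianPDFReal_nonneg _ _ _)]
    rfl
  simp_rw [this]
  rw [Measure.volume_eq_prod, ← Measure.prod_restrict,
    lintegral_prod_mul (measurable_gaussianPDF _ _).aemeasurable
      (measurable_gaussianPDF _ _).aemeasurable,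
    gaussianReal_of_var_ne_zero _ hv, withDensity_apply _ hs, withDensity_apply _ ht]

lemma gaussianPDFReal_half (x : ℝ) :
    gaussianPDFReal 0 (1 / 2) x = Real.exp (-x ^ 2) / Real.sqrt π := by
  rw [gaussianPDFReal]
  push_cast
  rw [show (2 : ℝ) * π * (1 / 2) = π by ring, div_eq_inv_mul, mul_comm]
  congr 1
  ring_nf

lemma integral_gaussian_prod_eq (g : ℝ × ℝ → ℂ) :
    ∫ p, g p ∂((gaussianReal 0 (1 / 2)).prod (gaussianReal 0 (1 / 2))) =
      ∫ p : ℝ × ℝ, (Real.exp (-(p.1 ^ 2 + p.2 ^ 2)) / π) • g p := by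
  have hmeq : (gaussianReal 0 (1 / 2)).prod (gaussianReal 0 (1 / 2)) =
      (volume : Measure (ℝ × ℝ)).withDensity
        (fun p => ENNReal.ofReal
          (gaussianPDFReal 0 (1 / 2) p.1 * gaussianPDFReal 0 (1 / 2) p.2)) :=
    gaussian_prod_eq
  have hd : ∀ p : ℝ × ℝ, gaussianPDFReal 0 (1 / 2) p.1 * gaussianPDFReal 0 (1 / 2) p.2
      = Real.exp (-(p.1 ^ 2 + p.2 ^ 2)) / π := by
    intro p
    rw [gaussianPDFReal_half, gaussianPDFReal_half, div_mul_div_comm,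
      Real.mul_self_sqrt Real.pi_pos.le, ← Real.exp_add, neg_add]
  simp_rw [hmeq, hd]
  have hm : Measurable fun p : ℝ × ℝ => (Real.exp (-(p.1 ^ 2 + p.2 ^ 2)) / π).toNNReal := by
    fun_prop
  rw [show (fun p : ℝ × ℝ => ENNReal.ofReal (Real.exp (-(p.1 ^ 2 + p.2 ^ 2)) / π))
      = fun p => ((Real.exp (-(p.1 ^ 2 + p.2 ^ 2)) / π).toNNReal : ℝ≥0∞) from rfl,
    integral_withDensity_eq_integral_smul hm]
  refine integral_congr_ae (Filter.Eventually.of_forall fun p => ?_)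
  simp only []; rw [NNReal.smul_def, Real.coe_toNNReal _ (by positivity)]

lemma angular_int (a b : ℕ) (hab : a ≠ b) :
    ∫ θ in Ioo (-π) π, Complex.exp ((((a : ℂ) - b) * Complex.I) * θ) = 0 := by
  have hc : ((a : ℂ) - b) * Complex.I ≠ 0 := by
    refine mul_ne_zero (sub_ne_zero.mpr ?_) Complex.I_ne_zero
    exact_mod_cast fun h => hab (Nat.cast_injective h)
  rw [← integral_Ioc_eq_integral_Ioo,
    ← intervalIntegral.integral_of_le (by linarith [Real.pi_pos] : -π ≤ π)]
  rw [integral_exp_mul_complex hc]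
  have h1 : ((a : ℂ) - b) * Complex.I * π = ((((a : ℤ) - b) : ℤ) : ℂ) * (π * Complex.I) := by
    push_cast; ring
  have h2 : ((a : ℂ) - b) * Complex.I * (-π : ℝ)
      = (((-((a : ℤ) - b)) : ℤ) : ℂ) * (π * Complex.I) := by push_cast; ring
  rw [show ((-π : ℝ) : ℂ) = (-π : ℂ) by push_cast; ring] at *
  rw [h1, h2, Complex.exp_int_mul, Complex.exp_int_mul, Complex.exp_pi_mul_I]
  rcases Int.even_or_odd ((a : ℤ) - b) with h | h
  · rw [h.neg_one_zpow, (h.neg).neg_one_zpow, sub_self, zero_div]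
  · rw [h.neg_one_zpow, (h.neg).neg_one_zpow, sub_self, zero_div]

lemma angular_int_eq (a : ℕ) :
    ∫ θ in Ioo (-π) π, Complex.exp ((((a : ℂ) - a) * Complex.I) * θ) = ((2 * π : ℝ) : ℂ) := by
  simp only [sub_self, zero_mul, Complex.exp_zero]
  rw [setIntegral_const, Real.volume_real_Ioo,
    max_eq_left (by linarith [Real.pi_pos])]
  rw [Complex.real_smul, mul_one]
  push_cast
  ring

lemma radial_int (n : ℕ) :
    ∫ r in Ioi (0 : ℝ), r ^ (n + 1) * Real.exp (-r ^ 2) / π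
      = Real.Gamma (((n : ℝ) + 2) / 2) / (2 * π) := by
  rw [integral_div]
  have h : ∀ r ∈ Ioi (0 : ℝ), r ^ (n + 1) * Real.exp (-r ^ 2)
      = r ^ (((n + 1 : ℕ) : ℝ)) * Real.exp (-r ^ (2 : ℝ)) := by
    intro r _
    rw [Real.rpow_natCast, show (2 : ℝ) = ((2 : ℕ) : ℝ) by norm_num, Real.rpow_natCast]
  rw [setIntegral_congr_fun measurableSet_Ioi h,
    integral_rpow_mul_exp_neg_rpow (by norm_num)
      (by push_cast; linarith [Nat.cast_nonneg (α := ℝ) n] : (-1 : ℝ) < ((n + 1 : ℕ) : ℝ))]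
  rw [show (((n + 1 : ℕ) : ℝ) + 1) / 2 = ((n : ℝ) + 2) / 2 by push_cast; ring]
  ring

lemma complex_gaussian_moment (a b : ℕ) :
    ∫ p : ℝ × ℝ, ((p.1 : ℂ) + (p.2 : ℂ) * Complex.I) ^ a
        * ((starRingEnd ℂ) ((p.1 : ℂ) + (p.2 : ℂ) * Complex.I)) ^ b
        ∂((gaussianReal 0 (1 / 2)).prod (gaussianReal 0 (1 / 2)))
      = if a = b then (a.factorial : ℂ) else 0 := by
  rw [integral_gaussian_prod_eq]
  rw [← integral_comp_polarCoord_symm]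
  have hcong : ∀ p ∈ polarCoord.target,
      p.1 • ((fun q : ℝ × ℝ => (Real.exp (-(q.1 ^ 2 + q.2 ^ 2)) / π) •
          (((q.1 : ℂ) + (q.2 : ℂ) * Complex.I) ^ a
            * ((starRingEnd ℂ) ((q.1 : ℂ) + (q.2 : ℂ) * Complex.I)) ^ b))
        (polarCoord.symm p))
      = (fun r : ℝ => ((r ^ (a + b + 1) * Real.exp (-r ^ 2) / π : ℝ) : ℂ)) p.1
          * (fun θ : ℝ => Complex.exp ((((a : ℂ) - b) * Complex.I) * θ)) p.2 := by
    intro p hp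
    simp only [polarCoord_symm_apply]
    have hxy : (p.1 * Real.cos p.2) ^ 2 + (p.1 * Real.sin p.2) ^ 2 = p.1 ^ 2 := by
      rw [mul_pow, mul_pow, ← mul_add, Real.cos_sq_add_sin_sq, mul_one]
    have hz : ((p.1 * Real.cos p.2 : ℝ) : ℂ) + ((p.1 * Real.sin p.2 : ℝ) : ℂ) * Complex.I
        = (p.1 : ℂ) * Complex.exp ((p.2 : ℂ) * Complex.I) := by
      rw [Complex.exp_mul_I]
      push_cast
      ring
    have hzc : (starRingEnd ℂ) ((p.1 : ℂ) * Complex.exp ((p.2 : ℂ) * Complex.I))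
        = (p.1 : ℂ) * Complex.exp (-(p.2 : ℂ) * Complex.I) := by
      rw [map_mul, Complex.conj_ofReal, ← Complex.exp_conj, map_mul, Complex.conj_I,
        Complex.conj_ofReal]
      ring_nf
    have hE : Complex.exp ((p.2 : ℂ) * Complex.I) ^ a
          * Complex.exp (-(p.2 : ℂ) * Complex.I) ^ b
        = Complex.exp ((((a : ℂ) - b) * Complex.I) * p.2) := by
      rw [← Complex.exp_nat_mul, ← Complex.exp_nat_mul, ← Complex.exp_add]
      congr 1
      ring
    simp only [hxy, hz, hzc]
    rw [Complex.real_smul, Complex.real_smul, mul_pow, mul_pow]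
    rw [show (p.1 : ℂ) ^ a * Complex.exp ((p.2 : ℂ) * Complex.I) ^ a
        * ((p.1 : ℂ) ^ b * Complex.exp (-(p.2 : ℂ) * Complex.I) ^ b)
        = (p.1 : ℂ) ^ a * (p.1 : ℂ) ^ b * (Complex.exp ((p.2 : ℂ) * Complex.I) ^ a
          * Complex.exp (-(p.2 : ℂ) * Complex.I) ^ b) by ring, hE]
    push_cast
    ring
  rw [setIntegral_congr_fun (polarCoord.open_target.measurableSet) hcong]
  rw [polarCoord_target, Measure.volume_eq_prod]
  have hfub := setIntegral_prod_mul (μ := (volume : Measure ℝ)) (ν := (volume : Measure ℝ))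
    (fun r : ℝ => ((r ^ (a + b + 1) * Real.exp (-r ^ 2) / π : ℝ) : ℂ))
    (fun θ : ℝ => Complex.exp ((((a : ℂ) - b) * Complex.I) * θ)) (Ioi 0) (Ioo (-π) π)
  rw [hfub]
  rw [show (∫ x in Ioi (0:ℝ), ((x ^ (a + b + 1) * Real.exp (-x ^ 2) / π : ℝ) : ℂ))
      = ((∫ x in Ioi (0:ℝ), x ^ (a + b + 1) * Real.exp (-x ^ 2) / π : ℝ) : ℂ) from integral_ofReal,
    radial_int (a + b)]
  by_cases hab : a = b
  · subst hab
    rw [angular_int_eq]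
    rw [if_pos rfl, ← Complex.ofReal_mul]
    have h1 : (((a + a : ℕ) : ℝ) + 2) / 2 = ((a : ℕ) : ℝ) + 1 := by push_cast; ring
    rw [h1, Real.Gamma_nat_eq_factorial]
    rw [show (a.factorial : ℝ) / (2 * π) * (2 * π) = a.factorial by
      field_simp]
    norm_cast
  · rw [angular_int _ _ hab, mul_zero, if_neg hab]

variable {k : ℕ} {ι : Type*} [Fintype ι] [DecidableEq ι]

def fiberEquivOf (q q' : Fin k → ι) (α : Equiv.Perm (Fin k)) (h : ∀ l, q l = q' (α l)) (p : ι) :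
    {l // q l = p} ≃ {l // q' l = p} where
  toFun l := ⟨α l.1, (h l.1).symm.trans l.2⟩
  invFun m := ⟨α.symm m.1, (h (α.symm m.1)).trans (by rw [α.apply_symm_apply]; exact m.2)⟩
  left_inv l := by simp
  right_inv m := by simp

def permFiberEquiv (q q' : Fin k → ι) :
    {α : Equiv.Perm (Fin k) // ∀ l, q l = q' (α l)}
      ≃ (∀ p, {l // q l = p} ≃ {l // q' l = p}) where
  toFun x p := fiberEquivOf q q' x.1 x.2 p
  invFun e := ⟨Equiv.ofFiberEquiv e, fun l => (Equiv.ofFiberEquiv_map e l).symm⟩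
  left_inv := fun ⟨α, h⟩ => Subtype.ext (Equiv.ext fun l => by
    simp [Equiv.ofFiberEquiv_apply, fiberEquivOf]
    rfl)
  right_inv := fun e => funext fun p => Equiv.ext fun l => Subtype.ext (by
    obtain ⟨l, hl⟩ := l
    subst hl
    simp only [Equiv.ofFiberEquiv_apply, fiberEquivOf, Equiv.coe_fn_mk]
    rfl)

lemma card_perm_fiber (q q' : Fin k → ι) :
    Fintype.card {α : Equiv.Perm (Fin k) // ∀ l, q l = q' (α l)}
      = ∏ p : ι, if (univ.filter fun l => q l = p).card = (univ.filter fun l => q' l = p).card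
          then ((univ.filter fun l => q l = p).card).factorial else 0 := by
  by_cases hN : ∀ p : ι, (univ.filter fun l => q l = p).card
      = (univ.filter fun l => q' l = p).card
  · rw [Fintype.card_congr (permFiberEquiv q q'), Fintype.card_pi]
    refine Finset.prod_congr rfl fun p _ => ?_
    rw [if_pos (hN p)]
    have hcards : Fintype.card {l // q l = p} = Fintype.card {l // q' l = p} := by
      rw [Fintype.card_subtype, Fintype.card_subtype]
      exact hN p
    rw [Fintype.card_equiv (Fintype.equivOfCardEq hcards), Fintype.card_subtype]
  · push_neg at hN
    obtain ⟨p, hp⟩ := hN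
    have h0 : (∏ p : ι,
        if (univ.filter fun l => q l = p).card = (univ.filter fun l => q' l = p).card
          then ((univ.filter fun l => q l = p).card).factorial else 0) = 0 :=
      Finset.prod_eq_zero (Finset.mem_univ p) (if_neg hp)
    rw [h0, Fintype.card_eq_zero_iff]
    refine ⟨fun ⟨α, h⟩ => hp ?_⟩
    rw [← Fintype.card_subtype, ← Fintype.card_subtype]
    exact Fintype.card_congr (fiberEquivOf q q' α h p)

lemma integral_pi_prod {ι : Type*} [Fintype ι] {E : Type*} [MeasurableSpace E]
    (μ : Measure E) [IsProbabilityMeasure μ] (f : ι → E → ℂ) :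
    ∫ x : ι → E, ∏ p, f p (x p) ∂(Measure.pi fun _ => μ) = ∏ p, ∫ w, f p w ∂μ := by
  letI : MeasureSpace E := ⟨μ⟩
  haveI : SigmaFinite (volume : Measure E) := inferInstanceAs (SigmaFinite μ)
  exact MeasureTheory.integral_fintype_prod_eq_prod (μ := fun _ => μ) f

lemma prod_comp_univ {β ι M : Type*} [Fintype β] [Fintype ι] [DecidableEq ι] [CommMonoid M]
    (f : ι → M) (g : β → ι) :
    ∏ l, f (g l) = ∏ p : ι, f p ^ (univ.filter fun l => g l = p).card := by
  refine (Finset.prod_comp (s := (Finset.univ : Finset β)) f g).trans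
    (Finset.prod_subset (Finset.subset_univ _) fun p _ hp => ?_)
  have : (univ.filter fun l => g l = p) = ∅ := by
    rw [Finset.filter_eq_empty_iff]
    intro l _
    exact fun h => hp (Finset.mem_image.mpr ⟨l, Finset.mem_univ l, h⟩)
  rw [this, Finset.card_empty, pow_zero]

lemma sum_perm_delta {k : ℕ} {ι : Type*} [Fintype ι] [DecidableEq ι] (q q' : Fin k → ι) :
    ∑ α : Equiv.Perm (Fin k), ∏ ℓ, (if q ℓ = q' (α ℓ) then (1 : ℂ) else 0)
      = ∏ p : ι,
          if (univ.filter fun l => q l = p).card = (univ.filter fun l => q' l = p).card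
            then ((((univ.filter fun l => q l = p).card).factorial : ℕ) : ℂ) else 0 := by
  have h2 : ∀ α : Equiv.Perm (Fin k), (∏ ℓ, if q ℓ = q' (α ℓ) then (1 : ℂ) else 0)
      = if (∀ ℓ, q ℓ = q' (α ℓ)) then (1 : ℂ) else 0 := by
    intro α
    rw [Finset.prod_boole]
    simp
  simp_rw [h2]
  rw [Finset.sum_boole, ← Fintype.card_subtype, card_perm_fiber q q', Nat.cast_prod]
  exact Finset.prod_congr rfl fun p _ => by rw [apply_ite (Nat.cast : ℕ → ℂ), Nat.cast_zero]

/-- Wick formula for a standard complex Gaussian matrix: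
`E[∏ m(iₗ,jₗ) · ∏ conj(m(i'ₗ,j'ₗ))] = ∑_{α ∈ S_k} ∏ δ(iₗ, i'_{α(ℓ)}) δ(jₗ, j'_{α(ℓ)})`. -/
theorem complex_gaussian_matrix_moment {d₁ d₂ k : ℕ}
    (i i' : Fin k → Fin d₁) (j j' : Fin k → Fin d₂) :
    ∫ ω : Fin d₁ × Fin d₂ → ℝ × ℝ,
        (∏ ℓ, cmatEntry ω (i ℓ) (j ℓ)) * (∏ ℓ, (starRingEnd ℂ) (cmatEntry ω (i' ℓ) (j' ℓ)))
        ∂(complexGaussianMat d₁ d₂)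
      = ∑ α : Equiv.Perm (Fin k), ∏ ℓ,
          (if i ℓ = i' (α ℓ) then (1 : ℂ) else 0) * (if j ℓ = j' (α ℓ) then (1 : ℂ) else 0) := by
  have hq : ∀ α : Equiv.Perm (Fin k), ∀ ℓ : Fin k,
      (if i ℓ = i' (α ℓ) then (1 : ℂ) else 0) * (if j ℓ = j' (α ℓ) then (1 : ℂ) else 0)
        = if (fun ℓ => (i ℓ, j ℓ)) ℓ = (fun ℓ => (i' ℓ, j' ℓ)) (α ℓ) then (1 : ℂ) else 0 := by
    intro α ℓ
    by_cases h1 : i ℓ = i' (α ℓ) <;> by_cases h2 : j ℓ = j' (α ℓ) <;>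
      simp [h1, h2, Prod.ext_iff]
  simp_rw [hq]
  rw [sum_perm_delta (fun ℓ => (i ℓ, j ℓ)) (fun ℓ => (i' ℓ, j' ℓ))]
  have h1 : ∀ ω : Fin d₁ × Fin d₂ → ℝ × ℝ,
      (∏ ℓ, cmatEntry ω (i ℓ) (j ℓ)) * (∏ ℓ, (starRingEnd ℂ) (cmatEntry ω (i' ℓ) (j' ℓ)))
      = ∏ p : Fin d₁ × Fin d₂,
          ((((ω p).1 : ℂ) + ((ω p).2 : ℂ) * Complex.I)
              ^ (univ.filter fun ℓ => (i ℓ, j ℓ) = p).card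
            * ((starRingEnd ℂ) (((ω p).1 : ℂ) + ((ω p).2 : ℂ) * Complex.I))
              ^ (univ.filter fun ℓ => (i' ℓ, j' ℓ) = p).card) := by
    intro ω
    have e1 : (∏ ℓ, cmatEntry ω (i ℓ) (j ℓ))
        = ∏ p : Fin d₁ × Fin d₂, (((ω p).1 : ℂ) + ((ω p).2 : ℂ) * Complex.I)
            ^ (univ.filter fun ℓ => (i ℓ, j ℓ) = p).card :=
      prod_comp_univ (fun p : Fin d₁ × Fin d₂ => (((ω p).1 : ℂ) + ((ω p).2 : ℂ) * Complex.I))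
        (fun ℓ => (i ℓ, j ℓ))
    have e2 : (∏ ℓ, (starRingEnd ℂ) (cmatEntry ω (i' ℓ) (j' ℓ)))
        = ∏ p : Fin d₁ × Fin d₂,
            ((starRingEnd ℂ) (((ω p).1 : ℂ) + ((ω p).2 : ℂ) * Complex.I))
              ^ (univ.filter fun ℓ => (i' ℓ, j' ℓ) = p).card :=
      prod_comp_univ
        (fun p : Fin d₁ × Fin d₂ => (starRingEnd ℂ) (((ω p).1 : ℂ) + ((ω p).2 : ℂ) * Complex.I))
        (fun ℓ => (i' ℓ, j' ℓ))
    rw [e1, e2, ← Finset.prod_mul_distrib]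
  rw [integral_congr_ae (Filter.Eventually.of_forall h1)]
  rw [show complexGaussianMat d₁ d₂ = Measure.pi (fun _ : Fin d₁ × Fin d₂ =>
      (gaussianReal 0 (1 / 2)).prod (gaussianReal 0 (1 / 2))) from rfl]
  rw [integral_pi_prod _ (fun p (w : ℝ × ℝ) =>
    ((w.1 : ℂ) + (w.2 : ℂ) * Complex.I) ^ (univ.filter fun ℓ => (i ℓ, j ℓ) = p).card
      * ((starRingEnd ℂ) ((w.1 : ℂ) + (w.2 : ℂ) * Complex.I))
        ^ (univ.filter fun ℓ => (i' ℓ, j' ℓ) = p).card)]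
  exact Finset.prod_congr rfl fun p _ => complex_gaussian_moment _ _
end

section
/- Let k, ℓ, m ≥ 1 and let G be a (kℓ)×m standard real Gaussian matrix, with rows indexed by Fin k × Fin ℓ and columns by Fin m, with i.i.d. real Gaussian entries of mean 0 and variance 1. Let W = G Gᵀ be the associated real Wishart matrix, and let W^Γ be its partial transpose on the ℓ-dimensional factor, defined entrywise by W^Γ((a,b),(a',b')) = W((a,b'),(a',b)). Then E[ trace(W^Γ) ] = kℓm and E[ trace((W^Γ)²) ] = k²ℓ²m + kℓm² + kℓm. -/
open MeasureTheory ProbabilityTheory Matrix Real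

/-- The law of a `(kℓ) × m` standard real Gaussian matrix with rows indexed by
`Fin k × Fin ℓ` and columns by `Fin m`: i.i.d. entries, each real Gaussian of mean `0` and
variance `1`. -/
noncomputable def realGaussianKLM (k ℓ m : ℕ) : Measure ((Fin k × Fin ℓ) × Fin m → ℝ) :=
  Measure.pi fun _ => gaussianReal 0 1

/-- The real Gaussian matrix `G` with entries `g(r,c) = ω(r,c)`. -/
def gMatR {k ℓ m : ℕ} (ω : (Fin k × Fin ℓ) × Fin m → ℝ) :
    Matrix (Fin k × Fin ℓ) (Fin m) ℝ :=
  Matrix.of fun r c => ω (r, c)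

/-- The real Wishart matrix `W = G Gᵀ`. -/
def wishartR {k ℓ m : ℕ} (ω : (Fin k × Fin ℓ) × Fin m → ℝ) :
    Matrix (Fin k × Fin ℓ) (Fin k × Fin ℓ) ℝ :=
  gMatR ω * (gMatR ω)ᵀ

/-- The partial transpose on the `ℓ`-dimensional factor:
`W^Γ((a,b),(a',b')) = W((a,b'),(a',b))`. -/
def wishartRPT {k ℓ m : ℕ} (ω : (Fin k × Fin ℓ) × Fin m → ℝ) :
    Matrix (Fin k × Fin ℓ) (Fin k × Fin ℓ) ℝ :=
  Matrix.of fun r r' => wishartR ω (r.1, r'.2) (r'.1, r.2)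

/-! ### Gaussian moments -/

/-- `n`-th moment of the standard real Gaussian. -/
noncomputable def gM (n : ℕ) : ℝ := ∫ x, x ^ n ∂(gaussianReal 0 1)

lemma integral_gaussianReal_eq (g : ℝ → ℝ) :
    ∫ x, g x ∂(gaussianReal 0 1) = ∫ x, gaussianPDFReal 0 1 x * g x := by
  rw [gaussianReal_of_var_ne_zero 0 one_ne_zero]
  have h : (gaussianPDF 0 1) = fun x => ((gaussianPDFReal 0 1 x).toNNReal : ENNReal) := rfl
  rw [h, integral_withDensity_eq_integral_smul ((measurable_gaussianPDFReal 0 1).real_toNNReal) g]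
  congr 1
  ext x
  simp [NNReal.smul_def, Real.coe_toNNReal _ (gaussianPDFReal_nonneg 0 1 x)]

lemma pdf_eq (x : ℝ) : gaussianPDFReal 0 1 x = (√(2*π))⁻¹ * rexp (-(1/2) * x^2) := by
  simp only [gaussianPDFReal, NNReal.coe_one, mul_one, sub_zero]
  congr 1
  ring

lemma integrable_pdf_pow (n : ℕ) :
    Integrable (fun x => gaussianPDFReal 0 1 x * x ^ n) := by
  have h := (integrable_rpow_mul_exp_neg_mul_sq (b := 1/2) (by norm_num) (s := n)
    (lt_of_lt_of_le neg_one_lt_zero (Nat.cast_nonneg n))).const_mul (√(2*π))⁻¹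
  refine h.congr (Filter.Eventually.of_forall fun x => ?_)
  show (√(2*π))⁻¹ * (x ^ (n:ℝ) * rexp (-(1/2) * x^2)) = gaussianPDFReal 0 1 x * x ^ n
  rw [pdf_eq, Real.rpow_natCast]
  ring

lemma integrable_pow_gaussian (n : ℕ) :
    Integrable (fun x => x ^ n) (gaussianReal 0 1) := by
  rw [gaussianReal_of_var_ne_zero 0 one_ne_zero]
  have h : (gaussianPDF 0 1) = fun x => ((gaussianPDFReal 0 1 x).toNNReal : ENNReal) := rfl
  rw [h, integrable_withDensity_iff_integrable_smul₀
    ((measurable_gaussianPDFReal 0 1).real_toNNReal).aemeasurable]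
  refine (integrable_pdf_pow n).congr (Filter.Eventually.of_forall fun x => ?_)
  simp [NNReal.smul_def, Real.coe_toNNReal _ (gaussianPDFReal_nonneg 0 1 x)]

lemma integral_comp_neg_real (g : ℝ → ℝ) : ∫ x : ℝ, g (-x) = ∫ x : ℝ, g x := by
  have he : MeasurableEmbedding (fun x : ℝ => -x) :=
    (Homeomorph.neg ℝ).measurableEmbedding
  rw [← he.integral_map, Measure.map_neg_eq_self (volume : Measure ℝ)]

lemma gM_zero : gM 0 = 1 := by simp [gM]

lemma gM_one : gM 1 = 0 := by
  rw [gM, integral_gaussianReal_eq]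
  have key : ∫ x, gaussianPDFReal 0 1 x * x ^ 1 = - ∫ x, gaussianPDFReal 0 1 x * x ^ 1 := by
    conv_lhs => rw [← integral_comp_neg_real (fun x => gaussianPDFReal 0 1 x * x ^ 1)]
    rw [← integral_neg]
    congr 1
    ext x
    have : gaussianPDFReal 0 1 (-x) = gaussianPDFReal 0 1 x := by
      rw [pdf_eq, pdf_eq]; ring_nf
    simp [this]
  linarith

lemma ioi_int (n : ℕ) : ∫ t in Set.Ioi (0:ℝ), t ^ n * rexp (-(1/2) * t^2) =
    (1/2:ℝ) ^ (-((n:ℝ)+1)/2) * (1/2) * Real.Gamma (((n:ℝ)+1)/2) := by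
  have h := integral_rpow_mul_exp_neg_mul_rpow (p := 2) (q := n) (b := 1/2)
    (by norm_num) (lt_of_lt_of_le neg_one_lt_zero (Nat.cast_nonneg n)) (by norm_num)
  have e : ∫ t in Set.Ioi (0:ℝ), t ^ n * rexp (-(1/2) * t^2)
      = ∫ t in Set.Ioi (0:ℝ), t ^ (n:ℝ) * rexp (-(1/2) * t ^ (2:ℝ)) := by
    refine setIntegral_congr_fun measurableSet_Ioi (fun x hx => ?_)
    norm_num [Real.rpow_natCast]
  rw [e, h]

lemma even_moment_aux (n : ℕ) (hn : Even n) :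
    ∫ x, gaussianPDFReal 0 1 x * x ^ n =
      2 * ((√(2*π))⁻¹ * ((1/2:ℝ) ^ (-((n:ℝ)+1)/2) * (1/2) * Real.Gamma (((n:ℝ)+1)/2))) := by
  calc ∫ x, gaussianPDFReal 0 1 x * x ^ n
      = ∫ x, (fun t => gaussianPDFReal 0 1 t * t ^ n) |x| := by
        congr 1; ext x
        simp only []
        rw [hn.pow_abs]
        congr 1
        simp only [gaussianPDFReal, NNReal.coe_one, mul_one, sub_zero, sq_abs]
    _ = 2 * ∫ t in Set.Ioi (0:ℝ), gaussianPDFReal 0 1 t * t ^ n := by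
        simpa using integral_comp_abs (f := fun t => gaussianPDFReal 0 1 t * t ^ n)
    _ = 2 * ∫ t in Set.Ioi (0:ℝ), (√(2*π))⁻¹ * (t ^ n * rexp (-(1/2) * t^2)) := by
        congr 1
        refine setIntegral_congr_fun measurableSet_Ioi (fun x _ => ?_)
        rw [pdf_eq]; ring
    _ = 2 * ((√(2*π))⁻¹ * ((1/2:ℝ) ^ (-((n:ℝ)+1)/2) * (1/2) * Real.Gamma (((n:ℝ)+1)/2))) := by
        rw [integral_const_mul, ioi_int n]

lemma rp (a : ℝ) : (1/2:ℝ) ^ (-a) = (2:ℝ) ^ a := by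
  rw [show (1/2:ℝ) = 2⁻¹ by norm_num, Real.inv_rpow (by norm_num), ← Real.rpow_neg (by norm_num),
    neg_neg]

lemma g32 : Real.Gamma (3/2) = √π / 2 := by
  rw [show (3/2:ℝ) = 1/2 + 1 by norm_num, Real.Gamma_add_one (by norm_num),
    Real.Gamma_one_half_eq]; ring

lemma g52 : Real.Gamma (5/2) = 3/4 * √π := by
  rw [show (5/2:ℝ) = 3/2 + 1 by norm_num, Real.Gamma_add_one (by norm_num), g32]; ring

lemma gM_two : gM 2 = 1 := by
  rw [gM, integral_gaussianReal_eq, even_moment_aux 2 (by decide)]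
  rw [show (-(((2:ℕ):ℝ)+1)/2 : ℝ) = -(3/2) by norm_num,
    show ((((2:ℕ):ℝ)+1)/2 : ℝ) = 3/2 by norm_num, rp, g32,
    show (3/2:ℝ) = 1 + 1/2 by norm_num, Real.rpow_add (by norm_num), Real.rpow_one,
    ← Real.sqrt_eq_rpow, Real.sqrt_mul (by norm_num) π]
  have h2 : √2 * √2 = 2 := Real.mul_self_sqrt (by norm_num)
  have hπ : √π > 0 := Real.sqrt_pos.mpr Real.pi_pos
  have h2' : √2 > 0 := Real.sqrt_pos.mpr (by norm_num)
  field_simp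

lemma gM_four : gM 4 = 3 := by
  rw [gM, integral_gaussianReal_eq, even_moment_aux 4 (by decide)]
  rw [show (-(((4:ℕ):ℝ)+1)/2 : ℝ) = -(5/2) by norm_num,
    show ((((4:ℕ):ℝ)+1)/2 : ℝ) = 5/2 by norm_num, rp, g52,
    show (5/2:ℝ) = 2 + 1/2 by norm_num, Real.rpow_add (by norm_num),
    ← Real.sqrt_eq_rpow, show ((2:ℝ) ^ (2:ℝ)) = 4 by
      rw [show ((2:ℝ):ℝ) = ((2:ℕ):ℝ) by norm_num, Real.rpow_natCast]; norm_num,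
    Real.sqrt_mul (by norm_num) π]
  have h2 : √2 * √2 = 2 := Real.mul_self_sqrt (by norm_num)
  have hπ : √π > 0 := Real.sqrt_pos.mpr Real.pi_pos
  have h2' : √2 > 0 := Real.sqrt_pos.mpr (by norm_num)
  field_simp

/-! ### Product structure -/

section PiProd
variable {ι : Type*} [Fintype ι] [DecidableEq ι]

noncomputable def gpi (ι : Type*) [Fintype ι] : Measure (ι → ℝ) :=
  Measure.pi fun _ => gaussianReal 0 1

omit [DecidableEq ι] in
lemma integral_gpi_prod (f : ι → ℝ → ℝ) :
    ∫ ω : ι → ℝ, ∏ i, f i (ω i) ∂(gpi ι) = ∏ i, ∫ x, f i x ∂(gaussianReal 0 1) := by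
  letI : MeasureSpace ℝ := ⟨gaussianReal 0 1⟩
  haveI : SigmaFinite (volume : Measure ℝ) := inferInstanceAs (SigmaFinite (gaussianReal 0 1))
  exact MeasureTheory.integral_fintype_prod_eq_prod f

omit [DecidableEq ι] in
lemma integrable_gpi_prod (f : ι → ℝ → ℝ) (hf : ∀ i, Integrable (f i) (gaussianReal 0 1)) :
    Integrable (fun ω : ι → ℝ => ∏ i, f i (ω i)) (gpi ι) := by
  letI : MeasureSpace ℝ := ⟨gaussianReal 0 1⟩
  haveI : SigmaFinite (volume : Measure ℝ) := inferInstanceAs (SigmaFinite (gaussianReal 0 1))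
  exact MeasureTheory.Integrable.fintype_prod hf

/-- Exponent pattern of a degree-4 monomial. -/
def e₄ (c₁ c₂ c₃ c₄ : ι) : ι → ℕ := fun i =>
  (if i = c₁ then 1 else 0) + (if i = c₂ then 1 else 0)
  + (if i = c₃ then 1 else 0) + (if i = c₄ then 1 else 0)

lemma single_prod (ω : ι → ℝ) (c : ι) :
    ∏ i, (ω i) ^ (if i = c then 1 else 0) = ω c := by
  simp [pow_ite, Finset.prod_ite_eq']

lemma quad_eq_prod (ω : ι → ℝ) (c₁ c₂ c₃ c₄ : ι) :
    ω c₁ * ω c₂ * (ω c₃ * ω c₄) = ∏ i, (ω i) ^ (e₄ c₁ c₂ c₃ c₄ i) := by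
  simp only [e₄, pow_add, Finset.prod_mul_distrib, single_prod]
  ring

lemma integral_quad (c₁ c₂ c₃ c₄ : ι) :
    ∫ ω, ω c₁ * ω c₂ * (ω c₃ * ω c₄) ∂(gpi ι) = ∏ i, gM (e₄ c₁ c₂ c₃ c₄ i) := by
  calc ∫ ω, ω c₁ * ω c₂ * (ω c₃ * ω c₄) ∂(gpi ι)
      = ∫ ω : ι → ℝ, ∏ i, (ω i) ^ (e₄ c₁ c₂ c₃ c₄ i) ∂(gpi ι) := by
        congr 1; ext ω; exact quad_eq_prod ω c₁ c₂ c₃ c₄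
    _ = ∏ i, gM (e₄ c₁ c₂ c₃ c₄ i) :=
        integral_gpi_prod (fun i x => x ^ (e₄ c₁ c₂ c₃ c₄ i))

lemma integrable_quad (c₁ c₂ c₃ c₄ : ι) :
    Integrable (fun ω : ι → ℝ => ω c₁ * ω c₂ * (ω c₃ * ω c₄)) (gpi ι) := by
  have h := integrable_gpi_prod (fun i x => x ^ (e₄ c₁ c₂ c₃ c₄ i))
    (fun i => integrable_pow_gaussian _)
  exact h.congr (Filter.Eventually.of_forall fun ω => (quad_eq_prod ω c₁ c₂ c₃ c₄).symm)

/-- Exponent pattern of a degree-2 monomial. -/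
def e₂ (c₁ c₂ : ι) : ι → ℕ := fun i =>
  (if i = c₁ then 1 else 0) + (if i = c₂ then 1 else 0)

lemma pair_eq_prod (ω : ι → ℝ) (c₁ c₂ : ι) :
    ω c₁ * ω c₂ = ∏ i, (ω i) ^ (e₂ c₁ c₂ i) := by
  simp only [e₂, pow_add, Finset.prod_mul_distrib, single_prod]

lemma gpi_integral_pair (c₁ c₂ : ι) :
    ∫ ω, ω c₁ * ω c₂ ∂(gpi ι) = ∏ i, gM (e₂ c₁ c₂ i) := by
  calc ∫ ω, ω c₁ * ω c₂ ∂(gpi ι)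
      = ∫ ω : ι → ℝ, ∏ i, (ω i) ^ (e₂ c₁ c₂ i) ∂(gpi ι) := by
        congr 1; ext ω; exact pair_eq_prod ω c₁ c₂
    _ = ∏ i, gM (e₂ c₁ c₂ i) := integral_gpi_prod (fun i x => x ^ (e₂ c₁ c₂ i))

lemma gpi_integrable_pair (c₁ c₂ : ι) :
    Integrable (fun ω : ι → ℝ => ω c₁ * ω c₂) (gpi ι) := by
  have h := integrable_gpi_prod (fun i x => x ^ (e₂ c₁ c₂ i))
    (fun i => integrable_pow_gaussian _)
  exact h.congr (Filter.Eventually.of_forall fun ω => (pair_eq_prod ω c₁ c₂).symm)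

/-! Values of the integrals. -/

lemma integral_sq (c : ι) : ∫ ω, ω c * ω c ∂(gpi ι) = 1 := by
  rw [gpi_integral_pair]
  refine Finset.prod_eq_one fun i _ => ?_
  by_cases h : i = c <;> simp [e₂, h, gM_two, gM_zero]

lemma integral_quad_same (c : ι) : ∫ ω, ω c * ω c * (ω c * ω c) ∂(gpi ι) = 3 := by
  rw [integral_quad, Finset.prod_eq_single c]
  · simp [e₄, gM_four]
  · intro b _ hb; simp [e₄, hb, gM_zero]
  · intro h; exact absurd (Finset.mem_univ c) h

lemma integral_quad_abba (a b : ι) (h : a ≠ b) :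
    ∫ ω, ω a * ω b * (ω b * ω a) ∂(gpi ι) = 1 := by
  rw [integral_quad]
  refine Finset.prod_eq_one fun i _ => ?_
  by_cases h1 : i = a <;> by_cases h2 : i = b
  · exact absurd (h1 ▸ h2) (h1 ▸ h)
  · simp [e₄, h1, h2, h, gM_two]
  · simp [e₄, h1, h2, Ne.symm h, gM_two]
  · simp [e₄, h1, h2, gM_zero]

lemma integral_quad_aabb (a b : ι) (h : a ≠ b) :
    ∫ ω, ω a * ω a * (ω b * ω b) ∂(gpi ι) = 1 := by
  rw [integral_quad]
  refine Finset.prod_eq_one fun i _ => ?_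
  by_cases h1 : i = a <;> by_cases h2 : i = b
  · exact absurd (h1 ▸ h2) (h1 ▸ h)
  · simp [e₄, h1, h2, h, gM_two]
  · simp [e₄, h1, h2, Ne.symm h, gM_two]
  · simp [e₄, h1, h2, gM_zero]

lemma integral_quad_distinct (a b c d : ι) (hab : a ≠ b) (hac : a ≠ c) (had : a ≠ d) :
    ∫ ω, ω a * ω b * (ω c * ω d) ∂(gpi ι) = 0 := by
  rw [integral_quad]
  refine Finset.prod_eq_zero (Finset.mem_univ a) ?_
  simp [e₄, hab, hac, had, gM_one]

end PiProd

/-! ### Main theorem -/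

set_option maxHeartbeats 1000000 in
/-- First and second moments of a partially transposed real Wishart matrix:
`E[tr(W^Γ)] = kℓm` and `E[tr((W^Γ)²)] = k²ℓ²m + kℓm² + kℓm`. -/
theorem real_wishart_partial_transpose_moments {k ℓ m : ℕ}
    (hk : 1 ≤ k) (hℓ : 1 ≤ ℓ) (hm : 1 ≤ m) :
    (∫ ω : (Fin k × Fin ℓ) × Fin m → ℝ, (wishartRPT ω).trace ∂(realGaussianKLM k ℓ m)
        = (k : ℝ) * ℓ * m) ∧
    (∫ ω : (Fin k × Fin ℓ) × Fin m → ℝ,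
          (wishartRPT ω * wishartRPT ω).trace ∂(realGaussianKLM k ℓ m)
        = (k : ℝ) ^ 2 * (ℓ : ℝ) ^ 2 * m + (k : ℝ) * ℓ * (m : ℝ) ^ 2 + (k : ℝ) * ℓ * m) := by
  have meq : realGaussianKLM k ℓ m = gpi ((Fin k × Fin ℓ) × Fin m) := rfl
  have wR : ∀ (ω : (Fin k × Fin ℓ) × Fin m → ℝ) (x y : Fin k × Fin ℓ),
      wishartR ω x y = ∑ i : Fin m, ω (x, i) * ω (y, i) := by
    intro ω x y
    simp [wishartR, gMatR, Matrix.mul_apply]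
  constructor
  · -- first moment
    have h1 : ∀ ω : (Fin k × Fin ℓ) × Fin m → ℝ,
        (wishartRPT ω).trace = ∑ c : (Fin k × Fin ℓ) × Fin m, ω c * ω c := by
      intro ω
      rw [Matrix.trace]
      simp only [Matrix.diag, wishartRPT, Matrix.of_apply, Prod.mk.eta, wR,
        Fintype.sum_prod_type]
    simp only [h1, meq]
    rw [integral_finset_sum _ (fun c _ => gpi_integrable_pair c c)]
    simp only [integral_sq, Finset.sum_const, Finset.card_univ, Fintype.card_prod,
      Fintype.card_fin, nsmul_eq_mul, mul_one]
    push_cast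
    ring
  · -- second moment
    let φ : ((Fin k × Fin ℓ) × (Fin k × Fin ℓ)) ≃ ((Fin k × Fin ℓ) × (Fin k × Fin ℓ)) :=
      ⟨fun p => ((p.1.1, p.2.2), (p.2.1, p.1.2)),
       fun p => ((p.1.1, p.2.2), (p.2.1, p.1.2)),
       fun p => rfl, fun p => rfl⟩
    have h2 : ∀ ω : (Fin k × Fin ℓ) × Fin m → ℝ,
        (wishartRPT ω * wishartRPT ω).trace
          = ∑ Q : ((Fin k × Fin ℓ) × (Fin k × Fin ℓ)) × Fin m × Fin m,
              ω (Q.1.1, Q.2.1) * ω (Q.1.2, Q.2.1) * (ω (Q.1.2, Q.2.2) * ω (Q.1.1, Q.2.2)) := by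
      intro ω
      have tr_eq : (wishartRPT ω * wishartRPT ω).trace
          = ∑ p : (Fin k × Fin ℓ) × (Fin k × Fin ℓ),
              wishartRPT ω p.1 p.2 * wishartRPT ω p.2 p.1 := by
        rw [Matrix.trace]
        simp only [Matrix.diag, Matrix.mul_apply]
        exact (Fintype.sum_prod_type
          (f := fun p : (Fin k × Fin ℓ) × (Fin k × Fin ℓ) =>
            wishartRPT ω p.1 p.2 * wishartRPT ω p.2 p.1)).symm
      calc (wishartRPT ω * wishartRPT ω).trace
          = ∑ p : (Fin k × Fin ℓ) × (Fin k × Fin ℓ),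
              wishartRPT ω p.1 p.2 * wishartRPT ω p.2 p.1 := tr_eq
        _ = ∑ p : (Fin k × Fin ℓ) × (Fin k × Fin ℓ),
              (fun q : (Fin k × Fin ℓ) × (Fin k × Fin ℓ) =>
                wishartR ω q.1 q.2 * wishartR ω q.2 q.1) (φ p) :=
            Finset.sum_congr rfl (fun p _ => rfl)
        _ = ∑ q : (Fin k × Fin ℓ) × (Fin k × Fin ℓ),
              wishartR ω q.1 q.2 * wishartR ω q.2 q.1 :=
            Equiv.sum_comp φ (fun q : (Fin k × Fin ℓ) × (Fin k × Fin ℓ) =>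
              wishartR ω q.1 q.2 * wishartR ω q.2 q.1)
        _ = ∑ q : (Fin k × Fin ℓ) × (Fin k × Fin ℓ),
              (∑ i : Fin m, ω (q.1, i) * ω (q.2, i)) * (∑ j : Fin m, ω (q.2, j) * ω (q.1, j)) := by
            simp only [wR]
        _ = ∑ Q : ((Fin k × Fin ℓ) × (Fin k × Fin ℓ)) × Fin m × Fin m,
              ω (Q.1.1, Q.2.1) * ω (Q.1.2, Q.2.1) * (ω (Q.1.2, Q.2.2) * ω (Q.1.1, Q.2.2)) := by
            rw [Fintype.sum_prod_type
              (f := fun Q : ((Fin k × Fin ℓ) × (Fin k × Fin ℓ)) × Fin m × Fin m =>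
                ω (Q.1.1, Q.2.1) * ω (Q.1.2, Q.2.1) * (ω (Q.1.2, Q.2.2) * ω (Q.1.1, Q.2.2)))]
            refine Finset.sum_congr rfl fun q _ => ?_
            rw [Finset.sum_mul_sum]
            exact (Fintype.sum_prod_type
              (f := fun r : Fin m × Fin m =>
                ω (q.1, r.1) * ω (q.2, r.1) * (ω (q.2, r.2) * ω (q.1, r.2)))).symm
    simp only [h2, meq]
    rw [integral_finset_sum _ (fun Q _ =>
      integrable_quad (Q.1.1, Q.2.1) (Q.1.2, Q.2.1) (Q.1.2, Q.2.2) (Q.1.1, Q.2.2))]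
    have hval : ∀ Q : ((Fin k × Fin ℓ) × (Fin k × Fin ℓ)) × Fin m × Fin m,
        ∫ ω, ω (Q.1.1, Q.2.1) * ω (Q.1.2, Q.2.1) * (ω (Q.1.2, Q.2.2) * ω (Q.1.1, Q.2.2))
            ∂(gpi ((Fin k × Fin ℓ) × Fin m))
          = (if Q.1.1 = Q.1.2 then (1:ℝ) else 0) + (if Q.2.1 = Q.2.2 then (1:ℝ) else 0)
            + (if Q.1.1 = Q.1.2 then (1:ℝ) else 0) * (if Q.2.1 = Q.2.2 then (1:ℝ) else 0) := by
      rintro ⟨⟨x, y⟩, i, j⟩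
      by_cases hxy : x = y <;> by_cases hij : i = j
      · subst hxy; subst hij
        simp only [if_pos rfl]
        rw [integral_quad_same]
        norm_num
      · subst hxy
        simp only [if_pos rfl, if_neg hij]
        rw [integral_quad_aabb (x, i) (x, j) (by simp [Prod.ext_iff, hij])]
        norm_num
      · subst hij
        simp only [if_pos rfl, if_neg hxy]
        rw [integral_quad_abba (x, i) (y, i) (by simp [Prod.ext_iff, hxy])]
        norm_num
      · simp only [if_neg hxy, if_neg hij]
        rw [integral_quad_distinct (x, i) (y, i) (y, j) (x, j)
          (by simp [Prod.ext_iff, hxy]) (by simp [Prod.ext_iff, hxy])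
          (by simp [Prod.ext_iff, hij])]
        norm_num
    rw [Finset.sum_congr rfl fun Q _ => hval Q]
    have sum_diag : ∀ (α : Type) [Fintype α] [DecidableEq α],
        ∑ p : α × α, (if p.1 = p.2 then (1:ℝ) else 0) = Fintype.card α := by
      intro α _ _
      rw [Fintype.sum_prod_type]
      simp [Finset.sum_ite_eq, Finset.card_univ]
    rw [Fintype.sum_prod_type
      (f := fun Q : ((Fin k × Fin ℓ) × (Fin k × Fin ℓ)) × Fin m × Fin m =>
        (if Q.1.1 = Q.1.2 then (1:ℝ) else 0) + (if Q.2.1 = Q.2.2 then (1:ℝ) else 0)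
          + (if Q.1.1 = Q.1.2 then (1:ℝ) else 0) * (if Q.2.1 = Q.2.2 then (1:ℝ) else 0))]
    have inner : ∀ p : (Fin k × Fin ℓ) × (Fin k × Fin ℓ),
        ∑ r : Fin m × Fin m,
          ((if p.1 = p.2 then (1:ℝ) else 0) + (if r.1 = r.2 then (1:ℝ) else 0)
            + (if p.1 = p.2 then (1:ℝ) else 0) * (if r.1 = r.2 then (1:ℝ) else 0))
        = (m:ℝ) * m * (if p.1 = p.2 then (1:ℝ) else 0) + m
            + (if p.1 = p.2 then (1:ℝ) else 0) * m := by
      intro p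
      rw [Finset.sum_add_distrib, Finset.sum_add_distrib, ← Finset.mul_sum, sum_diag (Fin m),
        Finset.sum_const, Finset.card_univ, Fintype.card_prod, Fintype.card_fin, nsmul_eq_mul]
      push_cast
      ring
    calc ∑ p : (Fin k × Fin ℓ) × (Fin k × Fin ℓ), ∑ r : Fin m × Fin m,
          ((if (p, r).1.1 = (p, r).1.2 then (1:ℝ) else 0)
            + (if (p, r).2.1 = (p, r).2.2 then (1:ℝ) else 0)
            + (if (p, r).1.1 = (p, r).1.2 then (1:ℝ) else 0)
              * (if (p, r).2.1 = (p, r).2.2 then (1:ℝ) else 0))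
        = ∑ p : (Fin k × Fin ℓ) × (Fin k × Fin ℓ),
            ((m:ℝ) * m * (if p.1 = p.2 then (1:ℝ) else 0) + m
              + (if p.1 = p.2 then (1:ℝ) else 0) * m) :=
          Finset.sum_congr rfl fun p _ => inner p
      _ = (k : ℝ) ^ 2 * (ℓ : ℝ) ^ 2 * m + (k : ℝ) * ℓ * (m : ℝ) ^ 2 + (k : ℝ) * ℓ * m := by
          rw [Finset.sum_add_distrib, Finset.sum_add_distrib, ← Finset.mul_sum,
            ← Finset.sum_mul, sum_diag ((Fin k × Fin ℓ)), Finset.sum_const, Finset.card_univ,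
            Fintype.card_prod, Fintype.card_prod, Fintype.card_fin, Fintype.card_fin,
            Fintype.card_prod, Fintype.card_fin, Fintype.card_fin]
          push_cast
          ring
end
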